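/- For a binary qubit observable with effects M_1 ≥ 0 and M_2 = 𝟙 − M_1 ≥ 0, the spectral norms satisfy ‖M_1 − M_2‖ = ‖M_1 ⊗ M_1 − M_2 ⊗ M_2‖, where ‖·‖ denotes the operator (spectral) norm. Hence two uses of a binary qubit observable do not decrease the minimum labeling error compared to one use. -/

import Mathlib

open Matrix Kronecker
open scoped ComplexOrder Matrix.Norms.L2Operator
open scoped NNReal ENNReal

section Aux

set_option linter.unusedSectionVars false
set_option linter.unusedTactic false

variable {n m : Type*} [Fintype n] [DecidableEq n] [Fintype m] [DecidableEq m]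

lemma star_kronecker (A : Matrix n n ℂ) (B : Matrix m m ℂ) :
    star (A ⊗ₖ B) = star A ⊗ₖ star B := by
  ext ⟨i, j⟩ ⟨k, l⟩
  simp [Matrix.star_eq_conjTranspose, Matrix.conjTranspose_apply, Matrix.kronecker_apply]

lemma spectrum_unitary_conj {a u : Matrix n n ℂ} (hu : u ∈ unitary (Matrix n n ℂ)) :
    spectrum ℂ (u * a * star u) = spectrum ℂ a :=
  spectrum.units_conjugate (u := ⟨u, star u, hu.2, hu.1⟩)

noncomputable local instance : CStarAlgebra (Matrix n n ℂ) :=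
  { Matrix.instL2OpNormedRing, Matrix.instL2OpNormedAlgebra,
    Matrix.instCStarRing,
    (inferInstance : StarRing (Matrix n n ℂ)),
    (inferInstance : StarModule ℂ (Matrix n n ℂ)),
    (inferInstance : CompleteSpace (Matrix n n ℂ)) with }

lemma nnnorm_of_spectrum {M : Matrix n n ℂ} (hM : IsSelfAdjoint M)
    {ι : Type*} [Fintype ι] [Nonempty ι] (d : ι → ℝ)
    (hspec : spectrum ℂ M = Set.range (fun i => (d i : ℂ))) :
    ‖M‖₊ = ⨆ i, ‖d i‖₊ := by
  have h := hM.spectralRadius_eq_nnnorm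
  rw [spectralRadius, hspec, iSup_range] at h
  have h2 : (⨆ i, (‖d i‖₊ : ℝ≥0∞)) = (‖M‖₊ : ℝ≥0∞) := by
    simpa using h
  rw [← ENNReal.coe_iSup ((Set.finite_range _).bddAbove)] at h2
  exact_mod_cast h2.symm

/-- spectrum of `A ⊗ₖ 1 + 1 ⊗ₖ A` for Hermitian `A` -/
lemma spectrum_kron {A : Matrix n n ℂ} (hA : A.IsHermitian) :
    spectrum ℂ (A ⊗ₖ (1 : Matrix n n ℂ) + (1 : Matrix n n ℂ) ⊗ₖ A) =
      Set.range (fun p : n × n => ((hA.eigenvalues p.1 + hA.eigenvalues p.2 : ℝ) : ℂ)) := by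
  set U : Matrix n n ℂ := (hA.eigenvectorUnitary : Matrix n n ℂ) with hU
  set D : Matrix n n ℂ := diagonal (RCLike.ofReal ∘ hA.eigenvalues) with hD
  have hsm : U * star U = 1 := Unitary.mul_star_self_of_mem hA.eigenvectorUnitary.2
  have hms : star U * U = 1 := Unitary.star_mul_self_of_mem hA.eigenvectorUnitary.2
  have hUU : U ⊗ₖ U ∈ unitary (Matrix (n × n) (n × n) ℂ) := by
    rw [Unitary.mem_iff]
    constructor
    · rw [star_kronecker, ← mul_kronecker_mul, hms, Matrix.one_kronecker_one]
    · rw [star_kronecker, ← mul_kronecker_mul, hsm, Matrix.one_kronecker_one]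
  have key : A ⊗ₖ (1 : Matrix n n ℂ) + (1 : Matrix n n ℂ) ⊗ₖ A =
      (U ⊗ₖ U) * diagonal (fun p : n × n =>
        ((hA.eigenvalues p.1 + hA.eigenvalues p.2 : ℝ) : ℂ)) * star (U ⊗ₖ U) := by
    have h1 : A ⊗ₖ (1 : Matrix n n ℂ) = (U ⊗ₖ U) * (D ⊗ₖ 1) * star (U ⊗ₖ U) := by
      rw [star_kronecker, ← mul_kronecker_mul, ← mul_kronecker_mul, mul_one, hsm]
      exact congrArg (· ⊗ₖ (1 : Matrix n n ℂ)) hA.spectral_theorem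
    have h2 : (1 : Matrix n n ℂ) ⊗ₖ A = (U ⊗ₖ U) * ((1 : Matrix n n ℂ) ⊗ₖ D) * star (U ⊗ₖ U) := by
      rw [star_kronecker, ← mul_kronecker_mul, ← mul_kronecker_mul, mul_one, hsm]
      exact congrArg ((1 : Matrix n n ℂ) ⊗ₖ ·) hA.spectral_theorem
    rw [h1, h2, ← add_mul, ← mul_add]
    congr 2
    rw [hD, show (1 : Matrix n n ℂ) = diagonal (fun _ => (1 : ℂ)) by simp,
      diagonal_kronecker_diagonal, diagonal_kronecker_diagonal, diagonal_add]
    congr 1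
    funext p
    push_cast
    simp
  rw [key, spectrum_unitary_conj hUU, spectrum_diagonal]

lemma spectrum_self {A : Matrix n n ℂ} (hA : A.IsHermitian) :
    spectrum ℂ A = Set.range (fun i : n => ((hA.eigenvalues i : ℝ) : ℂ)) := by
  conv_lhs => rw [hA.spectral_theorem]
  rw [Unitary.conjStarAlgAut_apply, spectrum_unitary_conj hA.eigenvectorUnitary.2, spectrum_diagonal]
  rfl

lemma sup_pair_eq {ι : Type*} [Fintype ι] [Nonempty ι] (d : ι → ℝ) :
    (⨆ p : ι × ι, ‖d p.1 + d p.2‖₊) = 2 * ⨆ i, ‖d i‖₊ := by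
  have hbdd : BddAbove (Set.range fun i => ‖d i‖₊) := (Set.finite_range _).bddAbove
  apply le_antisymm
  · refine ciSup_le fun p => ?_
    calc ‖d p.1 + d p.2‖₊ ≤ ‖d p.1‖₊ + ‖d p.2‖₊ := nnnorm_add_le _ _
      _ ≤ (⨆ i, ‖d i‖₊) + ⨆ i, ‖d i‖₊ := add_le_add (le_ciSup hbdd _) (le_ciSup hbdd _)
      _ = 2 * ⨆ i, ‖d i‖₊ := (two_mul _).symm
  · obtain ⟨i, hi⟩ := Finite.exists_max fun i => ‖d i‖₊
    have hsup : (⨆ j, ‖d j‖₊) = ‖d i‖₊ := le_antisymm (ciSup_le hi) (le_ciSup hbdd i)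
    rw [hsup]
    have h2 : ‖d i + d i‖₊ = 2 * ‖d i‖₊ := by
      apply NNReal.coe_injective
      push_cast [coe_nnnorm]
      rw [Real.norm_eq_abs, Real.norm_eq_abs, ← two_mul, abs_mul]
      simp
    rw [← h2]
    exact le_ciSup (f := fun p : ι × ι => ‖d p.1 + d p.2‖₊)
      ((Set.finite_range _).bddAbove) (i, i)

end Aux

/-- For a binary qubit observable `{M₁, M₂ = 𝟙 − M₁}`, the spectral (operator) norms
satisfy `‖M₁ − M₂‖ = ‖M₁ ⊗ M₁ − M₂ ⊗ M₂‖`; hence two uses of a binary qubit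
observable do not decrease the minimum labeling error compared to one use. -/
theorem qubit_two_shot_norm_eq
    (M₁ M₂ : Matrix (Fin 2) (Fin 2) ℂ)
    (hM₁ : M₁.PosSemidef) (hM₂ : M₂.PosSemidef)
    (hsum : M₁ + M₂ = 1) :
    ‖M₁ - M₂‖ = ‖M₁ ⊗ₖ M₁ - M₂ ⊗ₖ M₂‖ := by
  have hA : (M₁ - M₂).IsHermitian := hM₁.1.sub hM₂.1
  have hM2 : M₂ = 1 - M₁ := eq_sub_of_add_eq' hsum
  have hkron : (M₁ - M₂) ⊗ₖ (1 : Matrix (Fin 2) (Fin 2) ℂ)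
      + (1 : Matrix (Fin 2) (Fin 2) ℂ) ⊗ₖ (M₁ - M₂)
      = (2 : ℂ) • (M₁ ⊗ₖ M₁ - M₂ ⊗ₖ M₂) := by
    rw [hM2]
    ext ⟨i, j⟩ ⟨k, l⟩
    simp only [Matrix.kronecker_apply, Matrix.sub_apply, Matrix.add_apply, Matrix.smul_apply,
      Matrix.one_apply, smul_eq_mul]
    split <;> split <;> ring
  have hsaA : IsSelfAdjoint (M₁ - M₂) := hA
  have hsaB : IsSelfAdjoint ((M₁ - M₂) ⊗ₖ (1 : Matrix (Fin 2) (Fin 2) ℂ)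
      + (1 : Matrix (Fin 2) (Fin 2) ℂ) ⊗ₖ (M₁ - M₂)) := by
    rw [_root_.IsSelfAdjoint, star_add, star_kronecker, star_kronecker, star_one, hsaA.star_eq]
  have e1 : ‖M₁ - M₂‖₊ = ⨆ i, ‖hA.eigenvalues i‖₊ :=
    nnnorm_of_spectrum hsaA _ (spectrum_self hA)
  have e2 : ‖(M₁ - M₂) ⊗ₖ (1 : Matrix (Fin 2) (Fin 2) ℂ)
      + (1 : Matrix (Fin 2) (Fin 2) ℂ) ⊗ₖ (M₁ - M₂)‖₊
      = ⨆ p : Fin 2 × Fin 2, ‖hA.eigenvalues p.1 + hA.eigenvalues p.2‖₊ :=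
    nnnorm_of_spectrum hsaB _ (spectrum_kron hA)
  have e4 : ‖(2 : ℂ) • (M₁ ⊗ₖ M₁ - M₂ ⊗ₖ M₂)‖₊ = 2 * ‖M₁ ⊗ₖ M₁ - M₂ ⊗ₖ M₂‖₊ := by
    rw [nnnorm_smul]
    congr 1
    simp
  have key : (2 : ℝ≥0) * ‖M₁ ⊗ₖ M₁ - M₂ ⊗ₖ M₂‖₊ = 2 * ‖M₁ - M₂‖₊ := by
    rw [← e4, ← hkron, e2, sup_pair_eq hA.eigenvalues, ← e1]
  have hnn : ‖M₁ - M₂‖₊ = ‖M₁ ⊗ₖ M₁ - M₂ ⊗ₖ M₂‖₊ :=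
    mul_left_cancel₀ two_ne_zero key.symm
  rw [← coe_nnnorm, ← coe_nnnorm, hnn]
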